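/- Let (A(p), B(p)) be a linearly parameterized matrix pair satisfying the binary assumption, with graph 𝔾. If 𝔾 has no multi-colored subgraph, then rank [A(p) B(p)] < n for every p ∈ ℝ^q, and consequently (A, B) is not structurally controllable. -/

import Mathlib

open Matrix BigOperators

namespace StructCtrl

/-- A general linearly parameterized `n1 × n2` matrix `M(p) = ∑ k, p k • (g k * h k)`,
with columns `g k` and rows `h k`. -/
noncomputable def paramMat {q n1 n2 : ℕ} (g : Fin q → Fin n1 → ℝ) (h : Fin q → Fin n2 → ℝ)
    (p : Fin q → ℝ) : Matrix (Fin n1) (Fin n2) ℝ :=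
  Matrix.of fun i j => ∑ k : Fin q, p k * (g k i * h k j)

/-- Generic rank: the maximum over `p ∈ ℝ^q` of the rank of `M(p)`. -/
noncomputable def genericRank {q n1 n2 : ℕ} (g : Fin q → Fin n1 → ℝ)
    (h : Fin q → Fin n2 → ℝ) : ℕ :=
  ⨆ p : Fin q → ℝ, (paramMat g h p).rank

/-- `A(p)`: the `n × n` matrix of the first `n` columns of `[A(p) B(p)]`. -/
noncomputable def Amat {n m q : ℕ} (g : Fin q → Fin n → ℝ) (h : Fin q → Fin (n + m) → ℝ)
    (p : Fin q → ℝ) : Matrix (Fin n) (Fin n) ℝ :=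
  Matrix.of fun i j => paramMat g h p i (Fin.castAdd m j)

/-- `B(p)`: the `n × m` matrix of the last `m` columns of `[A(p) B(p)]`. -/
noncomputable def Bmat {n m q : ℕ} (g : Fin q → Fin n → ℝ) (h : Fin q → Fin (n + m) → ℝ)
    (p : Fin q → ℝ) : Matrix (Fin n) (Fin m) ℝ :=
  Matrix.of fun i j => paramMat g h p i (Fin.natAdd n j)

/-- Controllability matrix `[B  AB  …  A^{n-1}B]` (columns indexed by `Fin n × Fin m`). -/
noncomputable def ctrbMat {n m : ℕ} (A : Matrix (Fin n) (Fin n) ℝ)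
    (B : Matrix (Fin n) (Fin m) ℝ) : Matrix (Fin n) (Fin n × Fin m) ℝ :=
  Matrix.of fun i kj => (A ^ (kj.1 : ℕ) * B) i kj.2

/-- `(A, B)` is structurally controllable: for some parameter value the controllability
matrix has full rank `n`. -/
def StructurallyControllable {n m q : ℕ} (g : Fin q → Fin n → ℝ)
    (h : Fin q → Fin (n + m) → ℝ) : Prop :=
  ∃ p : Fin q → ℝ, (ctrbMat (Amat g h p) (Bmat g h p)).rank = n

/-- The binary assumption: all entries of every `g k` and every `h k` are `0` or `1`. -/
def BinaryAssumption {n m q : ℕ} (g : Fin q → Fin n → ℝ)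
    (h : Fin q → Fin (n + m) → ℝ) : Prop :=
  (∀ k i, g k i = 0 ∨ g k i = 1) ∧ (∀ k j, h k j = 0 ∨ h k j = 1)

/-- The unitary assumption: every `g k` and every `h k` is a standard unit vector, and the
pairs `(g k, h k)` are pairwise distinct. -/
def UnitaryAssumption {n m q : ℕ} (g : Fin q → Fin n → ℝ)
    (h : Fin q → Fin (n + m) → ℝ) : Prop :=
  (∀ k, ∃ i : Fin n, g k = Pi.single i 1) ∧
  (∀ k, ∃ j : Fin (n + m), h k = Pi.single j 1) ∧
  (∀ k k', k ≠ k' → (g k, h k) ≠ (g k', h k'))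

/-- `(A, B)` is reducible: some simultaneous permutation of the states puts the pair,
for all parameter values, in block-triangular form with a zero top-right `n1 × (n - n1)`
block of `A` and a zero top `n1 × m` block of `B`, where `1 ≤ n1 < n`. -/
def Reducible {n m q : ℕ} (g : Fin q → Fin n → ℝ) (h : Fin q → Fin (n + m) → ℝ) : Prop :=
  ∃ (σ : Equiv.Perm (Fin n)) (n1 : ℕ), 1 ≤ n1 ∧ n1 < n ∧ ∀ p : Fin q → ℝ,
    (∀ i j : Fin n, (i : ℕ) < n1 → n1 ≤ (j : ℕ) → Amat g h p (σ i) (σ j) = 0) ∧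
    (∀ i : Fin n, (i : ℕ) < n1 → ∀ jb : Fin m, Bmat g h p (σ i) jb = 0)

/-- `(A, B)` is irreducible. -/
def PairIrreducible {n m q : ℕ} (g : Fin q → Fin n → ℝ)
    (h : Fin q → Fin (n + m) → ℝ) : Prop :=
  ¬ Reducible g h

/-- Arc (of any color) of the graph `𝔾` of `(A, B)` from vertex `a` to vertex `b`:
`b` is a row-vertex `i` (one of the first `n` vertices) and the `(i, a)` entry of some
`g k * h k` is nonzero. -/
def HasArc {n m q : ℕ} (g : Fin q → Fin n → ℝ) (h : Fin q → Fin (n + m) → ℝ)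
    (a b : Fin (n + m)) : Prop :=
  ∃ (k : Fin q) (i : Fin n), b = Fin.castAdd m i ∧ g k i * h k a ≠ 0

/-- `𝔾` has a spanning forest rooted at the `m` input vertices `n+1, …, n+m`: every other
vertex is reachable from some input vertex by a directed path. -/
def HasSpanningForestAtInputs {n m q : ℕ} (g : Fin q → Fin n → ℝ)
    (h : Fin q → Fin (n + m) → ℝ) : Prop :=
  ∀ v : Fin (n + m), (¬ ∃ j : Fin m, Fin.natAdd n j = v) →
    ∃ j : Fin m, Relation.ReflTransGen (HasArc g h) (Fin.natAdd n j) v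

/-- A multi-colored subgraph of `𝔾`, encoded by the data of its `n` arcs: each of the
vertices `1, …, n` is the head of exactly one arc, with tail `t i` and color `c i`.
Injectivity of `t` and of `c` says no two arcs share a start vertex or a color (no two
share an end vertex by construction); such a spanning subgraph is exactly a disjoint union
of `m` directed path graphs (whose sources are the `m` input vertices) and directed cycle
graphs, with all arc colors distinct. -/
def IsMCS {n m q : ℕ} (g : Fin q → Fin n → ℝ) (h : Fin q → Fin (n + m) → ℝ)
    (t : Fin n → Fin (n + m)) (c : Fin n → Fin q) : Prop :=
  Function.Injective t ∧ Function.Injective c ∧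
    ∀ i : Fin n, g (c i) i * h (c i) (t i) ≠ 0

/-- A pure sink of the multi-colored subgraph with tail map `t`: a sink that is not a
source (i.e. has no outgoing arc, and is one of the first `n` vertices). -/
def IsPureSink {n m : ℕ} (t : Fin n → Fin (n + m)) (v : Fin (n + m)) : Prop :=
  (¬ ∃ i : Fin n, t i = v) ∧ ∃ i : Fin n, Fin.castAdd m i = v

/-- A pure source: a source (one of the last `m` vertices) that is not a sink. -/
def IsPureSource {n m : ℕ} (t : Fin n → Fin (n + m)) (v : Fin (n + m)) : Prop :=
  (∃ i : Fin n, t i = v) ∧ ∃ j : Fin m, Fin.natAdd n j = v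

/-- A matrimonial partition, encoded by a permutation `μ` that matches each pure sink with
a distinct pure source (the two-element cells are the pairs `{v, μ v}` for `v` a pure sink;
all other vertices lie in singleton cells). -/
def IsMatrimonial {n m : ℕ} (t : Fin n → Fin (n + m)) (μ : Equiv.Perm (Fin (n + m))) : Prop :=
  ∀ v, IsPureSink t v ↔ IsPureSource t (μ v)

/-- The successor map of the quotient of a multi-colored subgraph by a matrimonial
partition: each vertex with an outgoing arc is sent to the head of that arc, each pure
sink is welded to (sent to) its paired pure source, and isolated vertices stay put. -/
noncomputable def weldMap {n m : ℕ} (t : Fin n → Fin (n + m))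
    (μ : Equiv.Perm (Fin (n + m))) (v : Fin (n + m)) : Fin (n + m) :=
  if hv : ∃ i : Fin n, t i = v then Fin.castAdd m hv.choose
  else if ∃ i : Fin n, Fin.castAdd m i = v then μ v else v

/-- Number of orbits of a self-map of `Fin N`. -/
noncomputable def orbitCount {N : ℕ} (f : Fin N → Fin N) : ℕ :=
  (Set.range fun v => {w | ∃ a b : ℕ, f^[a] v = f^[b] w}).ncard

/-- Number of isolated vertices of a multi-colored subgraph (vertices that are both a
source and a sink). -/
noncomputable def isolatedCount {n m : ℕ} (t : Fin n → Fin (n + m)) : ℕ :=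
  {v : Fin (n + m) | (¬ ∃ i : Fin n, t i = v) ∧ ∃ j : Fin m, Fin.natAdd n j = v}.ncard

/-- The number of directed cycle graphs in the quotient of a multi-colored subgraph by a
matrimonial partition: every orbit of the weld map, except the (singleton) orbits of the
isolated vertices, yields exactly one cycle graph of the quotient. -/
noncomputable def quotCycleCount {n m : ℕ} (t : Fin n → Fin (n + m))
    (μ : Equiv.Perm (Fin (n + m))) : ℕ :=
  orbitCount (weldMap t μ) - isolatedCount t

/-- `𝔾` has an unbalanced similarity class of multi-colored subgraphs: for some
multi-colored subgraph `(t, c)` and some matrimonial partition `μ` for its class, the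
numbers of odd and of even multi-colored subgraphs in its similarity class (same sink set,
i.e. same `Set.range t`, and same color set `Set.range c`) differ. -/
def HasUnbalancedClass {n m q : ℕ} (g : Fin q → Fin n → ℝ)
    (h : Fin q → Fin (n + m) → ℝ) : Prop :=
  ∃ (t : Fin n → Fin (n + m)) (c : Fin n → Fin q) (μ : Equiv.Perm (Fin (n + m))),
    IsMCS g h t c ∧ IsMatrimonial t μ ∧
    {tc : (Fin n → Fin (n + m)) × (Fin n → Fin q) |
        IsMCS g h tc.1 tc.2 ∧ Set.range tc.1 = Set.range t ∧
        Set.range tc.2 = Set.range c ∧ Odd (quotCycleCount tc.1 μ)}.ncard ≠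
      {tc : (Fin n → Fin (n + m)) × (Fin n → Fin q) |
        IsMCS g h tc.1 tc.2 ∧ Set.range tc.1 = Set.range t ∧
        Set.range tc.2 = Set.range c ∧ Even (quotCycleCount tc.1 μ)}.ncard

/-- Arc set of the directed path graph whose vertices, in order, are the list `l`. -/
def pathArcs {V : Type*} (l : List V) : Set (V × V) :=
  {a | ∃ k : ℕ, l[k]? = some a.1 ∧ l[k + 1]? = some a.2}

/-- Arc set of the directed cycle graph whose vertices, in cyclic order, are the list `l`. -/
def cycleArcs {V : Type*} (l : List V) : Set (V × V) :=
  pathArcs l ∪ {a | ∃ x y, l.getLast? = some x ∧ l.head? = some y ∧ a = (x, y)}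

/-- A cactus graph with vertex set `W`, arc set `E` and root `r`: a trunk (a directed path
graph, possibly a single vertex, starting at `r`) together with any number of buds, each
bud being a directed cycle graph together with a stem arc from a vertex already in the
graph (on the trunk or on the cycle of another bud) to a vertex of the cycle. -/
inductive IsCactus {V : Type*} : Set V → Set (V × V) → V → Prop where
  | trunk (r : V) (l : List V) (hnd : l.Nodup) (hhead : l.head? = some r) :
      IsCactus {v | v ∈ l} (pathArcs l) r
  | bud (r : V) (W : Set V) (E : Set (V × V)) (l : List V) (w u : V)
      (hc : IsCactus W E r) (hnd : l.Nodup) (hne : l ≠ [])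
      (hdisj : ∀ v ∈ l, v ∉ W) (hw : w ∈ W) (hu : u ∈ l) :
      IsCactus (W ∪ {v | v ∈ l}) (E ∪ cycleArcs l ∪ {(w, u)}) r

/-- `𝔾` has a spanning subgraph which is a disjoint union of `m` cactus graphs rooted at
the `m` input vertices `n+1, …, n+m`, respectively. -/
def HasSpanningCacti {n m q : ℕ} (g : Fin q → Fin n → ℝ)
    (h : Fin q → Fin (n + m) → ℝ) : Prop :=
  ∃ (W : Fin m → Set (Fin (n + m))) (F : Fin m → Set (Fin (n + m) × Fin (n + m))),
    (∀ j, IsCactus (W j) (F j) (Fin.natAdd n j)) ∧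
    (∀ j, ∀ a ∈ F j, HasArc g h a.1 a.2) ∧
    Pairwise (fun j j' => Disjoint (W j) (W j')) ∧
    (⋃ j, W j) = Set.univ

/-- Rank of the submatrix `G_S` whose columns are the `g i`, `i ∈ S`. -/
noncomputable def rankCols {q n1 : ℕ} (g : Fin q → Fin n1 → ℝ) (S : Finset (Fin q)) : ℕ :=
  (Matrix.of fun (i : Fin n1) (k : {x // x ∈ S}) => g k.1 i).rank

/-- Rank of the submatrix `H_S` whose rows are the `h i`, `i ∈ S`. -/
noncomputable def rankRows {q n2 : ℕ} (h : Fin q → Fin n2 → ℝ) (S : Finset (Fin q)) : ℕ :=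
  (Matrix.of fun (k : {x // x ∈ S}) (j : Fin n2) => h k.1 j).rank

/-- `I` is a jointly independent index set of `(G, H)`: both `{g i : i ∈ I}` and
`{h i : i ∈ I}` are linearly independent families. -/
def JointlyIndependent {q n1 n2 : ℕ} (g : Fin q → Fin n1 → ℝ) (h : Fin q → Fin n2 → ℝ)
    (I : Finset (Fin q)) : Prop :=
  LinearIndependent ℝ (fun i : {x // x ∈ I} => g i.1) ∧
  LinearIndependent ℝ (fun i : {x // x ∈ I} => h i.1)

/-- Maximum cardinality of a nonempty jointly independent index set of `(G, H)`,
taken to be `0` if none exists. -/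
noncomputable def maxJointIndep {q n1 n2 : ℕ} (g : Fin q → Fin n1 → ℝ)
    (h : Fin q → Fin n2 → ℝ) : ℕ :=
  sSup (insert 0 {c : ℕ | ∃ I : Finset (Fin q), I.Nonempty ∧
    JointlyIndependent g h I ∧ I.card = c})

/-- Arcs of the transfer graph of `{G_𝐪, H_𝐪}`; vertex `0` is `none`, vertex `i ∈ 𝐪`
is `some i`.  There is an arc from `0` to `i` iff `h_{i2} ≠ 0`, and an arc from `j` to `i`
iff the scalar `h_{i1} g_j` is nonzero. -/
def TArc {n m q : ℕ} (g : Fin q → Fin n → ℝ) (h : Fin q → Fin (n + m) → ℝ) :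
    Option (Fin q) → Option (Fin q) → Prop
  | none, some i => ∃ j : Fin m, h i (Fin.natAdd n j) ≠ 0
  | some j, some i => (∑ l : Fin n, h i (Fin.castAdd m l) * g j l) ≠ 0
  | _, none => False

/-- The transfer graph has a spanning tree rooted at vertex `0`: every vertex `1, …, q`
is reachable from vertex `0` by a directed path. -/
def TransferRootedAtZero {n m q : ℕ} (g : Fin q → Fin n → ℝ)
    (h : Fin q → Fin (n + m) → ℝ) : Prop :=
  ∀ i : Fin q, Relation.ReflTransGen (TArc g h) none (some i)



private lemma exists_mcs_of_det_ne_zero {n m q : ℕ} (g : Fin q → Fin n → ℝ)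
    (h : Fin q → Fin (n + m) → ℝ) (p : Fin q → ℝ) (t : Fin n → Fin (n + m))
    (ht : Function.Injective t)
    (hdet : (Matrix.of fun i j => paramMat g h p i (t j)).det ≠ 0) :
    ∃ (t' : Fin n → Fin (n + m)) (c : Fin n → Fin q), IsMCS g h t' c := by
  classical
  have hexp : (Matrix.of fun i j => paramMat g h p i (t j)).det
      = ∑ c : Fin n → Fin q,
          (∏ i, p (c i) * g (c i) i) • (Matrix.of fun i j => h (c i) (t j)).det := by
    have h1 : (Matrix.of fun i j => paramMat g h p i (t j))
        = Matrix.of (fun i => ∑ k : Fin q, (p k * g k i) • (fun j => h k (t j))) := by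
      ext i j
      simp [paramMat, Finset.sum_apply, mul_assoc]
    rw [h1]
    show (Matrix.detRowAlternating (n := Fin n) (R := ℝ)).toMultilinearMap
        (fun i => ∑ k : Fin q, (p k * g k i) • (fun j => h k (t j))) = _
    rw [MultilinearMap.map_sum]
    refine Finset.sum_congr rfl fun c _ => ?_
    exact MultilinearMap.map_smul_univ _ (fun i => p (c i) * g (c i) i)
      (fun i => fun j => h (c i) (t j))
  rw [hexp] at hdet
  obtain ⟨c, -, hc⟩ := Finset.exists_ne_zero_of_sum_ne_zero hdet
  rw [smul_eq_mul] at hc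
  have hprod : (∏ i, p (c i) * g (c i) i) ≠ 0 := left_ne_zero_of_mul hc
  have hdetH : (Matrix.of fun i j => h (c i) (t j)).det ≠ 0 := right_ne_zero_of_mul hc
  have hg : ∀ i, g (c i) i ≠ 0 := fun i =>
    right_ne_zero_of_mul (Finset.prod_ne_zero_iff.mp hprod i (Finset.mem_univ i))
  have hcinj : Function.Injective c := by
    intro i i' hii'
    by_contra hne
    exact hdetH (Matrix.det_zero_of_row_eq hne (funext fun j => by
      simp only [Matrix.of_apply, hii']))
  rw [Matrix.det_apply] at hdetH
  obtain ⟨σ, -, hσ⟩ := Finset.exists_ne_zero_of_sum_ne_zero hdetH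
  have hσ' : (∏ i, h (c (σ i)) (t i)) ≠ 0 := by
    intro h0
    exact hσ (by
      have : (∏ i, (Matrix.of fun i j => h (c i) (t j)) (σ i) i) = 0 := h0
      rw [this, smul_zero])
  refine ⟨t ∘ σ.symm, c, ht.comp σ.symm.injective, hcinj, fun i => mul_ne_zero (hg i) ?_⟩
  have := Finset.prod_ne_zero_iff.mp hσ' (σ.symm i) (Finset.mem_univ _)
  simpa using this

private lemma rank_lt_of_no_mcs {n m q : ℕ} (g : Fin q → Fin n → ℝ)
    (h : Fin q → Fin (n + m) → ℝ)
    (hno : ¬ ∃ (t : Fin n → Fin (n + m)) (c : Fin n → Fin q), IsMCS g h t c)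
    (p : Fin q → ℝ) : (paramMat g h p).rank < n := by
  classical
  set M := paramMat g h p with hM
  have hle : M.rank ≤ n := le_trans M.rank_le_card_height (by simp)
  rcases lt_or_eq_of_le hle with hlt | heq
  · exact hlt
  · exfalso
    have hspan : Submodule.span ℝ (Set.range Mᵀ) = ⊤ := by
      apply Submodule.eq_top_of_finrank_eq
      change Module.finrank ℝ (Submodule.span ℝ (Set.range M.col)) = _
      rw [← Matrix.rank_eq_finrank_span_cols, heq]
      simp
    obtain ⟨b, hbsub, hbspan, hbli⟩ := exists_linearIndependent ℝ (Set.range Mᵀ)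
    rw [hspan] at hbspan
    have hfin : b.Finite := hbli.setFinite
    haveI := hfin.fintype
    have hb : Module.Basis b ℝ (Fin n → ℝ) :=
      Module.Basis.mk hbli (by rw [Subtype.range_coe, hbspan])
    have hcard : Fintype.card b = n := by
      have := Module.finrank_eq_card_basis hb
      simpa using this.symm
    let e : Fin n ≃ b := (Fintype.equivFinOfCardEq hcard).symm
    have hmem : ∀ i : Fin n, ∃ j : Fin (n + m), Mᵀ j = (e i : Fin n → ℝ) :=
      fun i => hbsub (e i).2
    choose t ht using hmem
    have htinj : Function.Injective t := by
      intro i i' hii'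
      apply e.injective
      apply Subtype.coe_injective
      show (e i : Fin n → ℝ) = (e i' : Fin n → ℝ)
      rw [← ht i, ← ht i', hii']
    have hli : LinearIndependent ℝ (fun i : Fin n => Mᵀ (t i)) := by
      have := hbli.comp e e.injective
      convert this using 1
      funext i
      exact ht i
      all_goals rfl
    have hU : IsUnit (M.submatrix id t) := by
      apply Matrix.linearIndependent_cols_iff_isUnit.mp
      convert hli using 1
      all_goals rfl
    have hdet : (Matrix.of fun i j => paramMat g h p i (t j)).det ≠ 0 := by
      have := isUnit_iff_ne_zero.mp ((Matrix.isUnit_iff_isUnit_det _).mp hU)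
      exact this
    exact hno (exists_mcs_of_det_ne_zero g h p t htinj hdet)

private lemma ctrb_rank_le {n m q : ℕ} (g : Fin q → Fin n → ℝ)
    (h : Fin q → Fin (n + m) → ℝ) (p : Fin q → ℝ) :
    (ctrbMat (Amat g h p) (Bmat g h p)).rank ≤ (paramMat g h p).rank := by
  classical
  set A := Amat g h p with hA
  set B := Bmat g h p with hB
  let X : Matrix (Fin (n + m)) (Fin n × Fin m) ℝ :=
    Matrix.of fun a kj => Fin.addCases
      (fun i => if (kj.1 : ℕ) = 0 then 0 else (A ^ ((kj.1 : ℕ) - 1) * B) i kj.2)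
      (fun jb => if (kj.1 : ℕ) = 0 ∧ jb = kj.2 then (1 : ℝ) else 0) a
  have hfac : paramMat g h p * X = ctrbMat A B := by
    ext i kj
    obtain ⟨k, j⟩ := kj
    rw [Matrix.mul_apply, Fin.sum_univ_add]
    have hAe : ∀ i' : Fin n, paramMat g h p i (Fin.castAdd m i') = A i i' := fun _ => rfl
    have hBe : ∀ jb : Fin m, paramMat g h p i (Fin.natAdd n jb) = B i jb := fun _ => rfl
    simp only [X, Matrix.of_apply, Fin.addCases_left, Fin.addCases_right, hAe, hBe]
    rcases Nat.eq_zero_or_eq_succ_pred (k : ℕ) with h0 | hs'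
    · simp only [h0, if_true, true_and, mul_zero, Finset.sum_const_zero, zero_add, mul_ite,
        mul_one, mul_zero]
      rw [Finset.sum_ite_eq' Finset.univ j (fun jb => B i jb)]
      simp [ctrbMat, h0]
    · have hk0 : (k : ℕ) ≠ 0 := by omega
      obtain ⟨s, hs⟩ : ∃ s, (k : ℕ) = s + 1 := ⟨(k : ℕ) - 1, by omega⟩
      have hs1 : (k : ℕ) - 1 = s := by omega
      simp only [hk0, if_false, false_and, mul_zero, Finset.sum_const_zero, add_zero, hs1]
      show _ = (A ^ (k : ℕ) * B) i j
      rw [hs, pow_succ', Matrix.mul_assoc, Matrix.mul_apply]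
  calc (ctrbMat A B).rank = (paramMat g h p * X).rank := by rw [hfac]
    _ ≤ (paramMat g h p).rank := Matrix.rank_mul_le_left _ _

/-- Under the binary assumption, if the graph `𝔾` of `(A, B)` has no
multi-colored subgraph, then `rank [A(p) B(p)] < n` for every `p`, and consequently
`(A, B)` is not structurally controllable. -/
theorem stmt16 (n m q : ℕ) (hn : 1 ≤ n) (hm : 1 ≤ m) (hq : 1 ≤ q)
    (g : Fin q → Fin n → ℝ) (h : Fin q → Fin (n + m) → ℝ)
    (hbin : BinaryAssumption g h)
    (hno : ¬ ∃ (t : Fin n → Fin (n + m)) (c : Fin n → Fin q), IsMCS g h t c) :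
    (∀ p : Fin q → ℝ, (paramMat g h p).rank < n) ∧ ¬ StructurallyControllable g h := by
  refine ⟨rank_lt_of_no_mcs g h hno, ?_⟩
  rintro ⟨p, hp⟩
  have h1 := ctrb_rank_le g h p
  have h2 := rank_lt_of_no_mcs g h hno p
  omega

end StructCtrl
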